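/- If the step sizes h^k of the adaptive projected SOR method satisfy 0 < h^k ≤ M_h < ∞ for all k, then each sweep satisfies V(x^{k+1}) − V(x^k) ≤ −γ̃‖x^{k+1} − x^k‖² with γ̃ = (1/M_h)·min(a₁₁,…,aₙₙ). -/

import Mathlib

open Matrix Finset

lemma proj_ineq (p c : ℝ) (hc : 0 ≤ c) : 0 ≤ (max p 0 - c) * (p - max p 0) := by
  rcases le_or_gt 0 p with h | h
  · simp [max_eq_left h]
  · rw [max_eq_right h.le]; nlinarith

lemma update_eq (n : ℕ) (z : Fin n → ℝ) (i : Fin n) (t : ℝ) :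
    Function.update z i t = z + (t - z i) • (Pi.single i 1 : Fin n → ℝ) := by
  funext j
  by_cases h : j = i
  · subst h; simp
  · simp [Function.update_of_ne h, Pi.single_apply, h]

lemma quad_update (n : ℕ) (A : Matrix (Fin n) (Fin n) ℝ) (hsym : Aᵀ = A)
    (z : Fin n → ℝ) (i : Fin n) (t : ℝ) :
    (Function.update z i t) ⬝ᵥ (A *ᵥ Function.update z i t)
      = z ⬝ᵥ (A *ᵥ z) + 2 * (t - z i) * ((A *ᵥ z) i) + A i i * (t - z i)^2 := by
  rw [update_eq]
  have h1 : ∀ v : Fin n → ℝ, (Pi.single i 1 : Fin n → ℝ) ⬝ᵥ v = v i := by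
    intro v; simp [dotProduct, Pi.single_apply]
  have h2 : z ⬝ᵥ (A *ᵥ (Pi.single i 1 : Fin n → ℝ)) = (A *ᵥ z) i := by
    rw [dotProduct_mulVec, ← mulVec_transpose, hsym, ← h1 (A *ᵥ z), dotProduct_comm]
  have h3 : (A *ᵥ (Pi.single i 1 : Fin n → ℝ)) i = A i i := by
    simp [mulVec, dotProduct, Pi.single_apply]
  rw [mulVec_add, mulVec_smul, dotProduct_add, add_dotProduct, add_dotProduct,
    dotProduct_smul, smul_dotProduct, smul_dotProduct, dotProduct_smul, h1, h2, h1, h3]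
  simp only [smul_eq_mul]
  ring

lemma arith_aux (h q γ a d : ℝ) (hhpos : 0 < h) (hγa : γ * h ≤ a)
    (H1 : (2 + h) * (a * d^2) ≤ 2 * h * q) :
    -q + 1/2 * a * d^2 ≤ -γ * d^2 := by
  have hd2 : 0 ≤ d^2 := sq_nonneg d
  have h10 : γ * h * d^2 ≤ a * d^2 := mul_le_mul_of_nonneg_right hγa hd2
  have h11 : 0 ≤ 2 * h * (q - γ * d^2 - 1/2 * a * d^2) := by nlinarith [H1, h10]
  nlinarith [h11, hhpos]

theorem stmt_7 (n : ℕ) [NeZero n] (A : Matrix (Fin n) (Fin n) ℝ)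
    (hA : A.PosSemidef) (hdiag : ∀ i, 0 < A i i) (b : Fin n → ℝ)
    (V : (Fin n → ℝ) → ℝ)
    (hV : V = fun x => (1 / 2) * (x ⬝ᵥ (A *ᵥ x)) - x ⬝ᵥ b)
    (Mh : ℝ) (hk : ℕ → ℝ) (hhk : ∀ k, 0 < hk k ∧ hk k ≤ Mh)
    (ωk : ℕ → ℝ) (hωk : ∀ k, ωk k = 2 * hk k / (2 + hk k))
    (γ : ℝ) (hγ : γ = (1 / Mh) * (univ.inf' univ_nonempty fun i => A i i))
    (x : ℕ → Fin n → ℝ) (hx0 : ∀ j, 0 ≤ x 0 j)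
    (hsweep : ∀ k, ∀ i : Fin n,
      x (k + 1) i = max ((1 - ωk k) * x k i + (ωk k / A i i) *
        (b i - (∑ j ∈ univ.filter (fun j => j < i), A i j * x (k + 1) j) -
          (∑ j ∈ univ.filter (fun j => i < j), A i j * x k j))) 0) :
    ∀ k, V (x (k + 1)) - V (x k) ≤ -γ * ∑ i, (x (k + 1) i - x k i) ^ 2 := by
  have hsym : Aᵀ = A := by
    have := hA.1
    simpa [Matrix.IsHermitian, Matrix.conjTranspose_eq_transpose_of_trivial] using this
  have hnn : ∀ m j, 0 ≤ x m j := by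
    intro m j
    cases m with
    | zero => exact hx0 j
    | succ m => rw [hsweep m j]; exact le_max_right _ _
  have hMh : 0 < Mh := lt_of_lt_of_le (hhk 0).1 (hhk 0).2
  have hγnn : 0 ≤ γ := by
    rw [hγ]
    apply mul_nonneg (by positivity)
    apply Finset.le_inf'
    intro i _
    exact (hdiag i).le
  have hVdiff : ∀ (z : Fin n → ℝ) (i : Fin n) (t : ℝ),
      V (Function.update z i t) - V z
        = (t - z i) * ((A *ᵥ z) i - b i) + (1/2) * A i i * (t - z i)^2 := by
    intro z i t
    rw [hV]
    simp only
    rw [quad_update n A hsym z i t, update_eq, add_dotProduct, smul_dotProduct]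
    have : (Pi.single i 1 : Fin n → ℝ) ⬝ᵥ b = b i := by
      simp [dotProduct, Pi.single_apply]
    rw [this]
    simp only [smul_eq_mul]
    ring
  intro k
  have hω : 0 < ωk k ∧ ωk k * (2 + hk k) = 2 * hk k := by
    have h1 := (hhk k).1
    constructor
    · rw [hωk k]; positivity
    · rw [hωk k]; field_simp
  -- the intermediate sweep vectors
  set y : ℕ → Fin n → ℝ := fun m j => if (j : ℕ) < m then x (k+1) j else x k j with hy
  have hy0 : y 0 = x k := by funext j; simp [hy]
  have hyn : y n = x (k+1) := by funext j; simp [hy, j.isLt]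
  have hyupd : ∀ i : Fin n, y ((i:ℕ)+1) = Function.update (y (i:ℕ)) i (x (k+1) i) := by
    intro i
    funext j
    by_cases hji : j = i
    · subst hji; simp [hy]
    · rw [Function.update_of_ne hji]
      have hne : (j:ℕ) ≠ (i:ℕ) := fun h => hji (Fin.ext h)
      by_cases h2 : (j:ℕ) < (i:ℕ)
      · simp [hy, h2, Nat.lt_succ_of_lt h2]
      · have h3 : ¬ (j:ℕ) < (i:ℕ)+1 := by omega
        simp [hy, h2, h3]
  -- per-step bound
  have key : ∀ i : Fin n, V (y ((i:ℕ)+1)) - V (y (i:ℕ))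
      ≤ -γ * (x (k+1) i - x k i)^2 := by
    intro i
    have hsplit : ∀ f : Fin n → ℝ, ∑ j, f j
        = (∑ j ∈ univ.filter (fun j => j < i), f j) + f i
          + ∑ j ∈ univ.filter (fun j => i < j), f j := by
      intro f
      have h1 : (univ.filter (fun j => ¬ j < i)) = insert i (univ.filter (fun j => i < j)) := by
        ext j
        simp only [mem_filter, mem_univ, true_and, mem_insert]
        constructor
        · intro hj
          rcases eq_or_lt_of_le (not_lt.mp hj) with h | h
          · exact Or.inl h.symm
          · exact Or.inr h
        · rintro (rfl | hj)
          · exact lt_irrefl _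
          · exact not_lt.mpr hj.le
      rw [← Finset.sum_filter_add_sum_filter_not univ (fun j => j < i) f, h1,
        Finset.sum_insert (by simp)]
      ring
    have hzi : y (i:ℕ) i = x k i := by simp [hy]
    have hAz : (A *ᵥ y (i:ℕ)) i
        = (∑ j ∈ univ.filter (fun j => j < i), A i j * x (k+1) j) + A i i * x k i
          + ∑ j ∈ univ.filter (fun j => i < j), A i j * x k j := by
      show ∑ j, A i j * y (i:ℕ) j = _
      rw [hsplit (fun j => A i j * y (i:ℕ) j)]
      congr 1
      · congr 1
        · apply Finset.sum_congr rfl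
          intro j hj
          simp only [mem_filter, mem_univ, true_and] at hj
          have : (j:ℕ) < (i:ℕ) := hj
          simp [hy, this]
        · rw [hzi]
      · apply Finset.sum_congr rfl
        intro j hj
        simp only [mem_filter, mem_univ, true_and] at hj
        have : ¬ (j:ℕ) < (i:ℕ) := not_lt.mpr hj.le
        simp [hy, this]
    -- abbreviations
    set a := A i i with hadef
    set c := x k i with hcdef
    set S₁ := ∑ j ∈ univ.filter (fun j => j < i), A i j * x (k+1) j with hS1
    set S₂ := ∑ j ∈ univ.filter (fun j => i < j), A i j * x k j with hS2
    set r := b i - S₁ - S₂ with hr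
    set ω := ωk k with hωdef
    set t := x (k+1) i with htdef
    set d := t - c with hd
    have ha : 0 < a := hdiag i
    have hc : 0 ≤ c := hnn k i
    have ht : t = max ((1 - ω) * c + (ω / a) * r) 0 := by
      rw [htdef, hsweep k i]
    have hp : (1 - ω) * c + (ω / a) * r = c + (ω / a) * (r - a * c) := by
      field_simp
      ring
    have hproj : 0 ≤ d * ((ω / a) * (r - a * c) - d) := by
      have := proj_ineq ((1 - ω) * c + (ω / a) * r) c hc
      rw [← ht] at this
      calc (0:ℝ) ≤ (t - c) * (((1 - ω) * c + (ω / a) * r) - t) := this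
        _ = d * ((ω / a) * (r - a * c) - d) := by rw [hp, hd]; ring
    have hq : a * d^2 ≤ ω * (d * (r - a * c)) := by
      have h5 : 0 ≤ a * (d * ((ω / a) * (r - a * c) - d)) :=
        mul_nonneg ha.le hproj
      have h6 : a * (d * ((ω / a) * (r - a * c) - d))
          = ω * (d * (r - a * c)) - a * d^2 := by
        field_simp
      linarith [h6 ▸ h5]
    -- the value decrease
    rw [hyupd i, hVdiff, hzi, hAz]
    have hγa : γ * hk k ≤ a := by
      have h7 : univ.inf' univ_nonempty (fun i => A i i) ≤ a :=
        Finset.inf'_le _ (mem_univ i)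
      have h8 : γ * Mh ≤ a := by
        rw [hγ]
        calc (1 / Mh) * (univ.inf' univ_nonempty fun i => A i i) * Mh
            = univ.inf' univ_nonempty (fun i => A i i) := by field_simp
          _ ≤ a := h7
      calc γ * hk k ≤ γ * Mh := mul_le_mul_of_nonneg_left (hhk k).2 hγnn
        _ ≤ a := h8
    have hd2 : 0 ≤ d^2 := sq_nonneg d
    have hhpos := (hhk k).1
    have hω2 := hω.2
    have H1 : (2 + hk k) * (a * d^2) ≤ 2 * hk k * (d * (r - a * c)) := by
      calc (2 + hk k) * (a * d^2) ≤ (2 + hk k) * (ω * (d * (r - a * c))) := by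
            apply mul_le_mul_of_nonneg_left hq (by linarith)
        _ = 2 * hk k * (d * (r - a * c)) := by rw [← hω2]; ring
    have hfin : (t - c) * (S₁ + a * c + S₂ - b i) + 1 / 2 * a * (t - c)^2
        ≤ -γ * (t - c)^2 := by
      have hrw : (t - c) * (S₁ + a * c + S₂ - b i) = -(d * (r - a * c)) := by
        rw [hd, hr]; ring
      rw [hrw, ← hd]
      exact arith_aux (hk k) (d * (r - a * c)) γ a d hhpos hγa H1
    exact hfin
  -- telescoping
  have tel : V (x (k+1)) - V (x k) = ∑ m ∈ range n, (V (y (m+1)) - V (y m)) := by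
    rw [Finset.sum_range_sub (fun m => V (y m)), hy0, hyn]
  rw [tel, ← Fin.sum_univ_eq_sum_range (fun m => V (y (m+1)) - V (y m)) n]
  calc ∑ i : Fin n, (V (y ((i:ℕ)+1)) - V (y (i:ℕ)))
      ≤ ∑ i : Fin n, -γ * (x (k+1) i - x k i)^2 := Finset.sum_le_sum fun i _ => key i
    _ = -γ * ∑ i, (x (k+1) i - x k i)^2 := by rw [Finset.mul_sum]
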